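/- For any three points b, b', z in ℝ² (Euclidean norm ‖·‖), if the distance from z to the segment joining b and b' is at least h ≥ 0, then ‖z-b‖ + ‖b'-z‖ - ‖b'-b‖ ≥ 2(√(h² + ‖b'-b‖²/4) - ‖b'-b‖/2), and in particular if ‖b'-b‖ ≤ 3n and h ≥ n^a with a > 1/2 and n ≥ 1, then ‖z-b‖ + ‖b'-z‖ - ‖b'-b‖ ≥ c·n^{2a-1} for a universal constant c > 0. -/

import Mathlib

open RealInnerProductSpace

/-- If `A² ≤ B²` and `0 ≤ B` then `A ≤ B`. -/
lemma aux_le_of_sq_le_sq (A B : ℝ) (hB : 0 ≤ B) (h : A ^ 2 ≤ B ^ 2) : A ≤ B := by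
  calc A ≤ |A| := le_abs_self A
  _ = Real.sqrt (A ^ 2) := (Real.sqrt_sq_eq_abs A).symm
  _ ≤ Real.sqrt (B ^ 2) := Real.sqrt_le_sqrt h
  _ = B := Real.sqrt_sq hB

set_option maxHeartbeats 1000000 in
/-- excess length of the broken line b → z → b' when z is at distance
at least h from the segment bb', and the n^(2a-1) lower bound. -/
theorem stmt_1 :
    (∀ (b b' z : EuclideanSpace ℝ (Fin 2)) (h : ℝ), 0 ≤ h →
      h ≤ Metric.infDist z (segment ℝ b b') →
      2 * (Real.sqrt (h ^ 2 + ‖b' - b‖ ^ 2 / 4) - ‖b' - b‖ / 2)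
        ≤ ‖z - b‖ + ‖b' - z‖ - ‖b' - b‖) ∧
    (∃ c : ℝ, 0 < c ∧
      ∀ (b b' z : EuclideanSpace ℝ (Fin 2)) (h n a : ℝ), 1 ≤ n → 1 / 2 < a → a ≤ 1 →
        ‖b' - b‖ ≤ 3 * n → n ^ a ≤ h →
        h ≤ Metric.infDist z (segment ℝ b b') →
        c * n ^ (2 * a - 1) ≤ ‖z - b‖ + ‖b' - z‖ - ‖b' - b‖) := by
  have key : ∀ (b b' z : EuclideanSpace ℝ (Fin 2)) (h : ℝ), 0 ≤ h →
      h ≤ Metric.infDist z (segment ℝ b b') →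
      2 * (Real.sqrt (h ^ 2 + ‖b' - b‖ ^ 2 / 4) - ‖b' - b‖ / 2)
        ≤ ‖z - b‖ + ‖b' - z‖ - ‖b' - b‖ := by
    intro b b' z h h0 hle
    by_cases hbb : b' = b
    · subst hbb
      simp only [sub_self, norm_zero]
      have h1 : h ≤ ‖z - b'‖ := by
        have := Metric.infDist_le_dist_of_mem (left_mem_segment ℝ b' b') (x := z)
        rw [dist_eq_norm] at this; linarith
      have h2 : ‖b' - z‖ = ‖z - b'‖ := norm_sub_rev b' z
      rw [show h ^ 2 + 0 ^ 2 / 4 = h ^ 2 by ring, Real.sqrt_sq h0]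
      linarith
    · set w := b' - b with hw
      set p := z - b with hp
      have hd : 0 < ‖w‖ := by
        rw [norm_pos_iff]
        exact sub_ne_zero.mpr hbb
      set dn := ‖w‖ with hdn
      set S := (inner ℝ p w : ℝ) with hS
      set s := S / dn with hs
      set L := ‖p‖ ^ 2 - s ^ 2 with hL
      have hsd : s * dn = S := div_mul_cancel₀ S hd.ne'
      -- Cauchy–Schwarz : 0 ≤ L
      have hCS := real_inner_mul_inner_self_le p w
      rw [real_inner_self_eq_norm_sq, real_inner_self_eq_norm_sq] at hCS
      have hL0 : 0 ≤ L := by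
        have hs2 : s ^ 2 ≤ ‖p‖ ^ 2 := by
          rw [hs, div_pow, div_le_iff₀ (by positivity)]
          nlinarith [hCS]
        rw [hL]; linarith
      -- norms of the two legs
      set x := ‖p‖ with hx
      set y := ‖b' - z‖ with hy
      have hx0 : 0 ≤ x := norm_nonneg _
      have hy0 : 0 ≤ y := norm_nonneg _
      have hx2 : x ^ 2 = L + s ^ 2 := by rw [hL]; ring
      have hy2 : y ^ 2 = L + (s - dn) ^ 2 := by
        have ey : b' - z = w - p := by rw [hw, hp]; abel
        rw [hy, ey, norm_sub_sq_real, real_inner_comm, ← hS, ← hx, ← hdn]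
        rw [hL]
        nlinarith [hsd]
      -- distance to points of the segment
      have hseg : ∀ t : ℝ, 0 ≤ t → t ≤ 1 → h ^ 2 ≤ L + (s - t * dn) ^ 2 := by
        intro t ht0 ht1
        have hmem : b + t • (b' - b) ∈ segment ℝ b b' := by
          rw [segment_eq_image']
          exact ⟨t, ⟨ht0, ht1⟩, rfl⟩
        have h1 : h ≤ ‖z - (b + t • (b' - b))‖ := by
          have := Metric.infDist_le_dist_of_mem hmem (x := z)
          rw [dist_eq_norm] at this; linarith
        have e : z - (b + t • (b' - b)) = p - t • w := by rw [hp, hw]; abel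
        have h2 : ‖z - (b + t • (b' - b))‖ ^ 2 = x ^ 2 - 2 * t * S + t ^ 2 * dn ^ 2 := by
          rw [e, norm_sub_sq_real, real_inner_smul_right, norm_smul, ← hS, ← hx]
          rw [Real.norm_eq_abs, mul_pow, sq_abs, ← hdn]
          ring
        have h3 : h ^ 2 ≤ x ^ 2 - 2 * t * S + t ^ 2 * dn ^ 2 := by
          rw [← h2]
          exact pow_le_pow_left₀ h0 h1 2
        nlinarith [h3, hx2, hsd]
      -- the product bound ‖p‖ * ‖b' - z‖ ≥ L ± s (s - dn)
      have hxyprod : (x * y) ^ 2 = (L + s ^ 2) * (L + (s - dn) ^ 2) := by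
        rw [mul_pow, hx2, hy2]
      have hxy1 : L - s * (s - dn) ≤ x * y := by
        apply aux_le_of_sq_le_sq _ _ (mul_nonneg hx0 hy0)
        nlinarith [hxyprod, mul_nonneg hL0 (sq_nonneg (s + (s - dn)))]
      have hxy2 : L + s * (s - dn) ≤ x * y := by
        apply aux_le_of_sq_le_sq _ _ (mul_nonneg hx0 hy0)
        nlinarith [hxyprod, mul_nonneg hL0 (sq_nonneg (s - (s - dn)))]
      -- main inequality (x + y)² ≥ 4 h² + dn²
      have hsq : 4 * h ^ 2 + dn ^ 2 ≤ (x + y) ^ 2 := by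
        rcases le_or_gt 0 s with hs0 | hsneg
        · rcases le_or_gt s dn with hsle | hsgt
          · have h5 := hseg (s / dn) (div_nonneg hs0 hd.le) ((div_le_one hd).mpr hsle)
            rw [div_mul_cancel₀ s hd.ne'] at h5
            nlinarith [hxy1, hx2, hy2, h5]
          · have h5 := hseg 1 zero_le_one le_rfl
            nlinarith [hxy2, hx2, hy2, h5,
              mul_nonneg (by linarith : (0:ℝ) ≤ s - dn) hd.le]
        · have h5 := hseg 0 le_rfl zero_le_one
          nlinarith [hxy2, hx2, hy2, h5,
            mul_nonneg (by linarith : (0:ℝ) ≤ -s) hd.le]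
      have hxy0 : 0 ≤ x + y := by positivity
      have hsqrt : Real.sqrt (4 * h ^ 2 + dn ^ 2) ≤ x + y := by
        have := Real.sqrt_le_sqrt hsq
        rwa [Real.sqrt_sq hxy0] at this
      have heq : 2 * Real.sqrt (h ^ 2 + dn ^ 2 / 4) = Real.sqrt (4 * h ^ 2 + dn ^ 2) := by
        rw [show 4 * h ^ 2 + dn ^ 2 = 2 ^ 2 * (h ^ 2 + dn ^ 2 / 4) by ring,
          Real.sqrt_mul (by positivity), Real.sqrt_sq (by norm_num)]
      linarith
  refine ⟨key, ⟨1 / 2, by norm_num, ?_⟩⟩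
  intro b b' z h n a hn ha ha1 hd hh hinf
  have hn0 : (0 : ℝ) < n := lt_of_lt_of_le one_pos hn
  have hH1 : (1 : ℝ) ≤ n ^ a := Real.one_le_rpow hn (by linarith)
  have hHn : n ^ a ≤ n := by
    calc n ^ a ≤ n ^ (1 : ℝ) := Real.rpow_le_rpow_of_exponent_le hn ha1
    _ = n := Real.rpow_one n
  have hkey := key b b' z (n ^ a) (by positivity) (le_trans hh hinf)
  set d := ‖b' - b‖ with hdd
  set H := n ^ a with hHdef
  have hd0 : (0 : ℝ) ≤ d := norm_nonneg _
  have hA : Real.sqrt (H ^ 2 + d ^ 2 / 4) ≤ H + d / 2 := by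
    have := Real.sqrt_le_sqrt (show H ^ 2 + d ^ 2 / 4 ≤ (H + d / 2) ^ 2 by nlinarith)
    rwa [Real.sqrt_sq (by positivity)] at this
  have hs0 : (0 : ℝ) < Real.sqrt (H ^ 2 + d ^ 2 / 4) + d / 2 := by
    have : (0:ℝ) < Real.sqrt (H ^ 2 + d ^ 2 / 4) := Real.sqrt_pos.mpr (by positivity)
    linarith
  have hid : (Real.sqrt (H ^ 2 + d ^ 2 / 4) - d / 2) * (Real.sqrt (H ^ 2 + d ^ 2 / 4) + d / 2)
      = H ^ 2 := by
    have h1 : Real.sqrt (H ^ 2 + d ^ 2 / 4) ^ 2 = H ^ 2 + d ^ 2 / 4 :=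
      Real.sq_sqrt (by positivity)
    nlinarith [h1]
  have hden : Real.sqrt (H ^ 2 + d ^ 2 / 4) + d / 2 ≤ 4 * n := by linarith
  have hpos : 0 ≤ Real.sqrt (H ^ 2 + d ^ 2 / 4) - d / 2 := by nlinarith [hid, hs0, sq_nonneg H]
  have hlow : H ^ 2 / (4 * n) ≤ Real.sqrt (H ^ 2 + d ^ 2 / 4) - d / 2 := by
    rw [div_le_iff₀ (by positivity)]
    nlinarith [hid, hden, hpos]
  have e : n ^ (2 * a - 1) * n = H ^ 2 := by
    nth_rewrite 2 [← Real.rpow_one n]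
    rw [← Real.rpow_add hn0, hHdef, ← Real.rpow_natCast (n ^ a) 2,
      ← Real.rpow_mul hn0.le]
    congr 1
    push_cast
    ring
  have hexp : n ^ (2 * a - 1) = H ^ 2 / n := by
    rw [eq_div_iff hn0.ne']
    exact e
  rw [hexp]
  have h2 : (1 : ℝ) / 2 * (H ^ 2 / n) = 2 * (H ^ 2 / (4 * n)) := by
    field_simp
    ring
  rw [h2]
  linarith [hkey, hlow]
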